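/- Let A be a nonnegative bounded linear operator on L²(X) with A^r = A (r ≥ 2) and kernel containing no nonzero nonnegative function. Suppose e_r, e_s ∈ R(A) are nonnegative with all three sets Supp e_r ∩ Supp e_s, Supp e_r \ Supp e_s, Supp e_s \ Supp e_r of positive measure, and the restrictions of e_r, e_s to Supp e_r ∩ Supp e_s are linearly independent. Then there exist four nonzero nonnegative functions in R(A) with pairwise essentially disjoint supports. -/

import Mathlib

open MeasureTheory Filter Topology ENNReal

private lemma aux_tendsto_Lp {X : Type*} [MeasurableSpace X] {μ : Measure X}
    (u : ℕ → Lp ℝ 2 μ) (g : Lp ℝ 2 μ) (bound : X → ℝ)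
    (hb : ∫⁻ x, (‖bound x‖₊ : ℝ≥0∞) ^ (2:ℝ) ∂μ ≠ ⊤)
    (hdom : ∀ n, ∀ᵐ x ∂μ, |(u n : X → ℝ) x - (g : X → ℝ) x| ≤ bound x)
    (ht : ∀ᵐ x ∂μ, Tendsto (fun n => (u n : X → ℝ) x) atTop (𝓝 ((g : X → ℝ) x))) :
    Tendsto u atTop (𝓝 g) := by
  rw [Lp.tendsto_Lp_iff_tendsto_eLpNorm']
  have h2 : ∀ n, eLpNorm (⇑(u n) - ⇑g) 2 μ
      = (∫⁻ x, (‖(u n : X → ℝ) x - (g : X → ℝ) x‖₊ : ℝ≥0∞) ^ (2:ℝ) ∂μ) ^ (1/(2:ℝ)) := by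
    intro n
    rw [eLpNorm_eq_lintegral_rpow_enorm_toReal (by norm_num) (by norm_num), ENNReal.toReal_ofNat]
    norm_num
    rfl
  have hlim : Tendsto
      (fun n => ∫⁻ x, (‖(u n : X → ℝ) x - (g : X → ℝ) x‖₊ : ℝ≥0∞) ^ (2:ℝ) ∂μ) atTop (𝓝 0) := by
    have h0 : (0 : ℝ≥0∞) = ∫⁻ _x, (0:ℝ≥0∞) ∂μ := by simp
    rw [h0]
    refine tendsto_lintegral_of_dominated_convergence'
      (fun x => (‖bound x‖₊ : ℝ≥0∞) ^ (2:ℝ)) (fun n => ?_) (fun n => ?_) hb ?_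
    · exact ((Lp.aestronglyMeasurable (u n)).sub (Lp.aestronglyMeasurable g)).enorm.pow_const _
    · filter_upwards [hdom n] with x hx
      refine ENNReal.rpow_le_rpow ?_ (by norm_num)
      rw [ENNReal.coe_le_coe]
      have : ‖(u n : X → ℝ) x - (g : X → ℝ) x‖ ≤ ‖bound x‖ := by
        rw [Real.norm_eq_abs, Real.norm_eq_abs]
        exact hx.trans (le_abs_self _)
      exact this
    · filter_upwards [ht] with x hx
      have h1 : Tendsto (fun n => (u n : X → ℝ) x - (g : X → ℝ) x) atTop (𝓝 0) := by
        simpa using hx.sub (tendsto_const_nhds (x := (g : X → ℝ) x))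
      have h2 : Tendsto (fun n => (‖(u n : X → ℝ) x - (g : X → ℝ) x‖₊ : ℝ≥0∞)) atTop (𝓝 0) := by
        rw [← ENNReal.coe_zero]
        exact ENNReal.tendsto_coe.2 (by simpa using h1.nnnorm)
      have := h2.ennrpow_const (2:ℝ)
      simpa [ENNReal.zero_rpow_of_pos] using this
  have := hlim.ennrpow_const (1/(2:ℝ))
  simp only [h2]
  simpa [ENNReal.zero_rpow_of_pos] using this

private lemma aux_t1 {X : Type*} [MeasurableSpace X] {μ : Measure X} (er' es' : X → ℝ)
    (hrnn : ∀ x, 0 ≤ er' x) (hsnn : ∀ x, 0 ≤ es' x)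
    (hcap : 0 < μ {x | 0 < er' x ∧ 0 < es' x})
    (hind : ∀ t : ℝ, 0 ≤ t → 0 < μ {x | 0 < er' x ∧ 0 < es' x ∧ er' x ≠ t * es' x}) :
    ∃ t : ℝ, 0 < t ∧ 0 < μ {x | 0 < er' x ∧ er' x < t * es' x}
      ∧ 0 < μ {x | 0 < es' x ∧ t * es' x < er' x} := by
  set Lt : ℝ → Set X := fun t => {x | 0 < er' x ∧ er' x < t * es' x} with hLt
  set Gt : ℝ → Set X := fun t => {x | 0 < es' x ∧ t * es' x < er' x} with hGt
  have hLt_mono : ∀ s t : ℝ, s ≤ t → Lt s ⊆ Lt t := by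
    intro s t hst x hx
    exact ⟨hx.1, hx.2.trans_le (mul_le_mul_of_nonneg_right hst (hsnn x))⟩
  have hexN : ∃ n : ℕ, 0 < μ (Lt n) := by
    by_contra h
    push_neg at h
    have hU : μ (⋃ n : ℕ, Lt n) = 0 :=
      measure_iUnion_null fun n => le_antisymm (h n) zero_le
    have hsub : {x | 0 < er' x ∧ 0 < es' x} ⊆ ⋃ n : ℕ, Lt n := by
      rintro x ⟨h1, h2⟩
      obtain ⟨n, hn⟩ := exists_nat_gt (er' x / es' x)
      refine Set.mem_iUnion.2 ⟨n, h1, ?_⟩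
      rwa [div_lt_iff₀ h2] at hn
    exact absurd (measure_mono_null hsub hU) hcap.ne'
  set Z := {t : ℝ | μ (Lt t) = 0} with hZ
  have hZ0 : (0:ℝ) ∈ Z := by
    have hempty : Lt 0 = ∅ := by
      ext x
      simp only [hLt, Set.mem_setOf_eq, Set.mem_empty_iff_false, iff_false, not_and]
      intro h1 h2
      rw [zero_mul] at h2
      linarith
    show μ (Lt 0) = 0
    rw [hempty]
    exact measure_empty
  obtain ⟨n0, hn0⟩ := hexN
  have hZbdd : BddAbove Z := by
    refine ⟨n0, fun z hz => ?_⟩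
    by_contra hzn
    push_neg at hzn
    exact absurd (measure_mono_null (hLt_mono _ _ hzn.le) hz) hn0.ne'
  set t0 := sSup Z with ht0
  have ht0nn : 0 ≤ t0 := le_csSup hZbdd hZ0
  have hlt_t0 : ∀ s, s < t0 → μ (Lt s) = 0 := by
    intro s hs
    obtain ⟨z, hzZ, hsz⟩ := exists_lt_of_lt_csSup ⟨0, hZ0⟩ hs
    exact measure_mono_null (hLt_mono _ _ hsz.le) hzZ
  have hLt0 : μ (Lt t0) = 0 := by
    have hsub : Lt t0 ⊆ ⋃ n : ℕ, Lt (t0 - 1/(n+1)) := by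
      rintro x ⟨h1, h2⟩
      have hesx : 0 < es' x := by
        rcases (hsnn x).lt_or_eq with h | h
        · exact h
        · rw [← h, mul_zero] at h2; linarith
      obtain ⟨n, hn⟩ := exists_nat_one_div_lt
        (K := ℝ) (ε := (t0 * es' x - er' x) / es' x) (div_pos (by linarith) hesx)
      refine Set.mem_iUnion.2 ⟨n, h1, ?_⟩
      rw [lt_div_iff₀ hesx] at hn
      nlinarith
    refine measure_mono_null hsub (measure_iUnion_null fun n => hlt_t0 _ ?_)
    have : 0 < 1/((n:ℝ)+1) := by positivity
    linarith
  have hGt_ex : ∃ t1, t0 < t1 ∧ 0 < μ (Gt t1) := by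
    by_contra h
    push_neg at h
    have hU : μ (⋃ n : ℕ, Gt (t0 + 1/(n+1))) = 0 := by
      refine measure_iUnion_null fun n => le_antisymm (h _ ?_) zero_le
      have : 0 < 1/((n:ℝ)+1) := by positivity
      linarith
    have hsub : {x | 0 < es' x ∧ t0 * es' x < er' x} ⊆ ⋃ n : ℕ, Gt (t0 + 1/(n+1)) := by
      rintro x ⟨h1, h2⟩
      obtain ⟨n, hn⟩ := exists_nat_one_div_lt
        (K := ℝ) (ε := (er' x - t0 * es' x) / es' x) (div_pos (by linarith) h1)
      refine Set.mem_iUnion.2 ⟨n, h1, ?_⟩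
      rw [lt_div_iff₀ h1] at hn
      nlinarith
    have hG0 : μ {x | 0 < es' x ∧ t0 * es' x < er' x} = 0 := measure_mono_null hsub hU
    have hD : μ {x | 0 < er' x ∧ 0 < es' x ∧ er' x ≠ t0 * es' x} = 0 := by
      refine measure_mono_null ?_ (measure_union_null hLt0 hG0)
      rintro x ⟨h1, h2, h3⟩
      rcases lt_or_gt_of_ne h3 with h | h
      · exact Or.inl ⟨h1, h⟩
      · exact Or.inr ⟨h2, h⟩
    exact absurd hD (hind t0 ht0nn).ne'
  obtain ⟨t1, ht1, hGpos⟩ := hGt_ex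
  have hLpos : 0 < μ (Lt t1) := by
    rcases (zero_le : 0 ≤ μ (Lt t1)).lt_or_eq with h | h
    · exact h
    · exact absurd (le_csSup hZbdd h.symm) (not_le.2 ht1)
  exact ⟨t1, lt_of_le_of_lt ht0nn ht1, hLpos, hGpos⟩

set_option maxHeartbeats 2000000 in
theorem stmt12 {X : Type*} [MeasurableSpace X] (μ : Measure X) [IsFiniteMeasure μ]
    (A : Lp ℝ 2 μ →L[ℝ] Lp ℝ 2 μ)
    (hpos : ∀ f : Lp ℝ 2 μ, 0 ≤ f → 0 ≤ A f)
    (r : ℕ) (hr : 2 ≤ r) (hpot : A ^ r = A)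
    (hker : ∀ h : Lp ℝ 2 μ, A h = 0 → 0 ≤ h → h = 0)
    (er es : Lp ℝ 2 μ) (her : er ∈ Set.range A) (hes : es ∈ Set.range A)
    (her0 : 0 ≤ er) (hes0 : 0 ≤ es)
    (hcap : 0 < μ (Function.support (er : X → ℝ) ∩ Function.support (es : X → ℝ)))
    (hrs : 0 < μ (Function.support (er : X → ℝ) \ Function.support (es : X → ℝ)))
    (hsr : 0 < μ (Function.support (es : X → ℝ) \ Function.support (er : X → ℝ)))
    (hindep : ∀ α β : ℝ,
      (fun x => α * (Function.support (er : X → ℝ) ∩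
          Function.support (es : X → ℝ)).indicator (er : X → ℝ) x
        + β * (Function.support (er : X → ℝ) ∩
          Function.support (es : X → ℝ)).indicator (es : X → ℝ) x) =ᵐ[μ] 0 →
      α = 0 ∧ β = 0) :
    ∃ f : Fin 4 → Lp ℝ 2 μ,
      (∀ i, f i ∈ Set.range A) ∧ (∀ i, f i ≠ 0) ∧ (∀ i, 0 ≤ f i) ∧
      ∀ i j, i ≠ j →
        μ (Function.support (f i : X → ℝ) ∩ Function.support (f j : X → ℝ)) = 0 := by
  classical
  -- the projection P = A^(r-1)
  set P : Lp ℝ 2 μ →L[ℝ] Lp ℝ 2 μ := A ^ (r - 1) with hP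
  have hpow_nonneg : ∀ (n : ℕ) (v : Lp ℝ 2 μ), 0 ≤ v → 0 ≤ (A ^ n) v := by
    intro n
    induction n with
    | zero => intro v hv; simpa using hv
    | succ n ih =>
      intro v hv
      rw [pow_succ', ContinuousLinearMap.mul_apply]
      exact hpos _ (ih v hv)
  have hPpos : ∀ v : Lp ℝ 2 μ, 0 ≤ v → 0 ≤ P v := fun v hv => hpow_nonneg _ v hv
  have hPP : ∀ v : Lp ℝ 2 μ, P (P v) = P v := by
    intro v
    have h1 : P * P = P := by
      rw [hP, ← pow_add]
      have h2 : (r-1) + (r-1) = (r-2) + r := by omega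
      rw [h2, pow_add, hpot, ← pow_succ]
      congr 1
      omega
    calc P (P v) = (P * P) v := (ContinuousLinearMap.mul_apply _ _ _).symm
    _ = P v := by rw [h1]
  have hfix : ∀ g : Lp ℝ 2 μ, g ∈ Set.range A → P g = g := by
    rintro g ⟨k, rfl⟩
    have h : P * A = A := by
      rw [hP, ← pow_succ]
      have h2 : r - 1 + 1 = r := by omega
      rw [h2, hpot]
    calc P (A k) = (P * A) k := (ContinuousLinearMap.mul_apply _ _ _).symm
    _ = A k := by rw [h]
  have hPrange : ∀ v : Lp ℝ 2 μ, P v ∈ Set.range A := by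
    intro v
    have h : P = A * A ^ (r - 2) := by
      rw [hP, ← pow_succ']
      congr 1
      omega
    exact ⟨(A ^ (r-2)) v, by rw [h, ContinuousLinearMap.mul_apply]⟩
  have hker' : ∀ v : Lp ℝ 2 μ, 0 ≤ v → P v = 0 → v = 0 := by
    intro v hv hPv
    have hw : (A ^ (r - 2)) (A v) = 0 := by
      have h : A ^ (r-2) * A = P := by
        rw [hP, ← pow_succ]
        congr 1
        omega
      calc (A ^ (r-2)) (A v) = (A ^ (r-2) * A) v := (ContinuousLinearMap.mul_apply _ _ _).symm
      _ = P v := by rw [h]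
      _ = 0 := hPv
    have hAv : A v = 0 := by
      have e1 : P (A v) = A v := by
        have h : P * A = A ^ r := by
          rw [hP, ← pow_succ]
          congr 1
          omega
        calc P (A v) = (P * A) v := (ContinuousLinearMap.mul_apply _ _ _).symm
        _ = (A ^ r) v := by rw [h]
        _ = A v := by rw [hpot]
      have e2 : P (A v) = 0 := by
        have h : P = A * A ^ (r-2) := by
          rw [hP, ← pow_succ']
          congr 1
          omega
        rw [h, ContinuousLinearMap.mul_apply, hw, map_zero]
      rw [← e1, e2]
    exact hker v hAv hv
  have hmono : ∀ u v : Lp ℝ 2 μ, u ≤ v → P u ≤ P v := by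
    intro u v huv
    have h := hPpos (v - u) (by rwa [sub_nonneg])
    rw [map_sub] at h
    exact sub_nonneg.1 h
  have hC_inf : ∀ u v : Lp ℝ 2 μ, 0 ≤ u → P u = u → 0 ≤ v → P v = v →
      0 ≤ u ⊓ v ∧ P (u ⊓ v) = u ⊓ v := by
    intro u v hu hu' hv hv'
    have h0 : 0 ≤ u ⊓ v := le_inf hu hv
    have h1 : P (u ⊓ v) ≤ u ⊓ v :=
      le_inf ((hmono _ _ inf_le_left).trans_eq hu') ((hmono _ _ inf_le_right).trans_eq hv')
    have h2 : 0 ≤ u ⊓ v - P (u ⊓ v) := by rwa [sub_nonneg]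
    have h3 : P (u ⊓ v - P (u ⊓ v)) = 0 := by rw [map_sub, hPP, sub_self]
    exact ⟨h0, (sub_eq_zero.1 (hker' _ h2 h3)).symm⟩
  -- nonnegative measurable representatives
  obtain ⟨er', her'm, her'ae, her'nn⟩ :
      ∃ g : X → ℝ, Measurable g ∧ (⇑er =ᵐ[μ] g) ∧ ∀ x, 0 ≤ g x := by
    obtain ⟨g, hgm, hgae⟩ := Lp.aestronglyMeasurable er
    refine ⟨fun x => max (g x) 0, hgm.measurable.max measurable_const, ?_,
      fun x => le_max_right _ _⟩
    filter_upwards [hgae, (Lp.coeFn_nonneg er).2 her0] with x h1 h2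
    rw [← h1]
    exact (max_eq_left h2).symm
  obtain ⟨es', hes'm, hes'ae, hes'nn⟩ :
      ∃ g : X → ℝ, Measurable g ∧ (⇑es =ᵐ[μ] g) ∧ ∀ x, 0 ≤ g x := by
    obtain ⟨g, hgm, hgae⟩ := Lp.aestronglyMeasurable es
    refine ⟨fun x => max (g x) 0, hgm.measurable.max measurable_const, ?_,
      fun x => le_max_right _ _⟩
    filter_upwards [hgae, (Lp.coeFn_nonneg es).2 hes0] with x h1 h2
    rw [← h1]
    exact (max_eq_left h2).symm
  have hae : ∀ᵐ x ∂μ, (er : X → ℝ) x = er' x ∧ (es : X → ℝ) x = es' x := her'ae.and hes'ae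
  have hmeq : ∀ s t : Set X, (∀ᵐ x ∂μ, x ∈ s ↔ x ∈ t) → μ s = μ t :=
    fun s t h => measure_congr (Filter.eventuallyEq_set.2 h)
  have hpos_iff_er : ∀ x, er' x ≠ 0 ↔ 0 < er' x :=
    fun x => ⟨fun h => (her'nn x).lt_of_ne (Ne.symm h), fun h => h.ne'⟩
  have hpos_iff_es : ∀ x, es' x ≠ 0 ↔ 0 < es' x :=
    fun x => ⟨fun h => (hes'nn x).lt_of_ne (Ne.symm h), fun h => h.ne'⟩
  -- translate measure hypotheses
  have hcap' : 0 < μ {x | 0 < er' x ∧ 0 < es' x} := by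
    rw [← hmeq _ _ ?_]
    · exact hcap
    · filter_upwards [hae] with x hx
      simp only [Set.mem_inter_iff, Function.mem_support, Set.mem_setOf_eq, hx.1, hx.2,
        hpos_iff_er x, hpos_iff_es x]
  have hrs' : 0 < μ {x | es' x = 0 ∧ 0 < er' x} := by
    rw [← hmeq _ _ ?_]
    · exact hrs
    · filter_upwards [hae] with x hx
      simp only [Set.mem_diff, Function.mem_support, Set.mem_setOf_eq, hx.1, hx.2,
        hpos_iff_er x, not_not]
      tauto
  have hsr' : 0 < μ {x | er' x = 0 ∧ 0 < es' x} := by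
    rw [← hmeq _ _ ?_]
    · exact hsr
    · filter_upwards [hae] with x hx
      simp only [Set.mem_diff, Function.mem_support, Set.mem_setOf_eq, hx.1, hx.2,
        hpos_iff_es x, not_not]
      tauto
  -- independence in primed form
  have hind : ∀ t : ℝ, 0 ≤ t → 0 < μ {x | 0 < er' x ∧ 0 < es' x ∧ er' x ≠ t * es' x} := by
    intro t _
    rcases (zero_le : 0 ≤ μ {x | 0 < er' x ∧ 0 < es' x ∧ er' x ≠ t * es' x}).lt_or_eq with h | h
    · exact h
    · exfalso
      have hD := h.symm
      have key : (fun x => 1 * (Function.support (er : X → ℝ) ∩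
          Function.support (es : X → ℝ)).indicator (er : X → ℝ) x
          + (-t) * (Function.support (er : X → ℝ) ∩
          Function.support (es : X → ℝ)).indicator (es : X → ℝ) x) =ᵐ[μ] 0 := by
        filter_upwards [hae, measure_eq_zero_iff_ae_notMem.1 hD] with x hx hxD
        by_cases hxS : x ∈ Function.support (er : X → ℝ) ∩ Function.support (es : X → ℝ)
        · rw [Set.indicator_of_mem hxS, Set.indicator_of_mem hxS]
          obtain ⟨hr0, hs0⟩ := hxS
          rw [Function.mem_support] at hr0 hs0
          have hr0' : 0 < er' x := (hpos_iff_er x).1 (by rw [← hx.1]; exact hr0)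
          have hs0' : 0 < es' x := (hpos_iff_es x).1 (by rw [← hx.2]; exact hs0)
          have heq : er' x = t * es' x := by
            by_contra hne
            exact hxD ⟨hr0', hs0', hne⟩
          rw [hx.1, hx.2, heq]
          simp only [Pi.zero_apply]
          ring
        · rw [Set.indicator_of_notMem hxS, Set.indicator_of_notMem hxS]
          simp
      exact one_ne_zero (hindep 1 (-t) key).1
  -- choose t1
  obtain ⟨t1, ht1pos, hLpos, hGpos⟩ := aux_t1 (μ := μ) er' es' her'nn hes'nn hcap' hind
  -- cone facts for basic elements
  have hCer : P er = er := hfix er her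
  have hCes : P es = es := hfix es hes
  have hCt1es : 0 ≤ t1 • es ∧ P (t1 • es) = t1 • es := by
    constructor
    · refine (Lp.coeFn_nonneg _).1 ?_
      filter_upwards [Lp.coeFn_smul t1 es, (Lp.coeFn_nonneg es).2 hes0] with x h1 h2
      rw [h1]
      simp only [Pi.smul_apply, smul_eq_mul]
      exact mul_nonneg ht1pos.le h2
    · rw [_root_.map_smul, hCes]
  -- f1 and f2
  set m1 : Lp ℝ 2 μ := er ⊓ (t1 • es) with hm1
  have hCm1 := hC_inf er (t1 • es) her0 hCer hCt1es.1 hCt1es.2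
  set a1 : Lp ℝ 2 μ := er - m1 with ha1
  have hCa1 : 0 ≤ a1 ∧ P a1 = a1 :=
    ⟨sub_nonneg.2 inf_le_left, by rw [ha1, map_sub, hCer, hCm1.2]⟩
  set f1 : Lp ℝ 2 μ := a1 ⊓ m1 with hf1
  have hCf1 := hC_inf a1 m1 hCa1.1 hCa1.2 hCm1.1 hCm1.2
  set m2 : Lp ℝ 2 μ := (t1 • es) ⊓ er with hm2
  have hCm2 := hC_inf (t1 • es) er hCt1es.1 hCt1es.2 her0 hCer
  set b2 : Lp ℝ 2 μ := (t1 • es) - m2 with hb2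
  have hCb2 : 0 ≤ b2 ∧ P b2 = b2 :=
    ⟨sub_nonneg.2 inf_le_left, by rw [hb2, map_sub, hCt1es.2, hCm2.2]⟩
  set f2 : Lp ℝ 2 μ := b2 ⊓ m2 with hf2
  have hCf2 := hC_inf b2 m2 hCb2.1 hCb2.2 hCm2.1 hCm2.2
  -- coe formulas for f1 f2
  have hf1coe : ∀ᵐ x ∂μ, (f1 : X → ℝ) x
      = min (er' x - min (er' x) (t1 * es' x)) (min (er' x) (t1 * es' x)) := by
    filter_upwards [Lp.coeFn_inf a1 m1, Lp.coeFn_sub er m1, Lp.coeFn_inf er (t1 • es),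
      Lp.coeFn_smul t1 es, hae] with x h1 h2 h3 h4 hx
    simp only [Pi.inf_apply, Pi.sub_apply, Pi.smul_apply, smul_eq_mul] at h1 h2 h3 h4
    rw [hf1, h1, h2, h3, h4, hx.1, hx.2]
  have hf2coe : ∀ᵐ x ∂μ, (f2 : X → ℝ) x
      = min (t1 * es' x - min (t1 * es' x) (er' x)) (min (t1 * es' x) (er' x)) := by
    filter_upwards [Lp.coeFn_inf b2 m2, Lp.coeFn_sub (t1 • es) m2, Lp.coeFn_inf (t1 • es) er,
      Lp.coeFn_smul t1 es, hae] with x h1 h2 h3 h4 hx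
    simp only [Pi.inf_apply, Pi.sub_apply, Pi.smul_apply, smul_eq_mul] at h1 h2 h3 h4
    rw [hf2, h1, h2, h3, h4, hx.1, hx.2]
  -- f3 : limit construction
  have hmem_er' : MemLp er' 2 μ := (memLp_congr_ae her'ae).1 (Lp.memLp er)
  have hmem_es' : MemLp es' 2 μ := (memLp_congr_ae hes'ae).1 (Lp.memLp es)
  have hb_er : ∫⁻ x, (‖er' x‖₊ : ℝ≥0∞) ^ (2:ℝ) ∂μ ≠ ⊤ := by
    have h := hmem_er'.eLpNorm_lt_top
    rw [eLpNorm_eq_lintegral_rpow_enorm_toReal (by norm_num) (by norm_num),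
      ENNReal.toReal_ofNat] at h
    simp only [enorm_eq_nnnorm] at h
    intro hc
    rw [hc, ENNReal.top_rpow_of_pos (by norm_num)] at h
    exact lt_irrefl _ h
  have hb_es : ∫⁻ x, (‖es' x‖₊ : ℝ≥0∞) ^ (2:ℝ) ∂μ ≠ ⊤ := by
    have h := hmem_es'.eLpNorm_lt_top
    rw [eLpNorm_eq_lintegral_rpow_enorm_toReal (by norm_num) (by norm_num),
      ENNReal.toReal_ofNat] at h
    simp only [enorm_eq_nnnorm] at h
    intro hc
    rw [hc, ENNReal.top_rpow_of_pos (by norm_num)] at h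
    exact lt_irrefl _ h
  set g3 : X → ℝ := fun x => if es' x = 0 then er' x else 0 with hg3
  have hg3m : Measurable g3 :=
    Measurable.ite (hes'm (measurableSet_singleton 0)) her'm measurable_const
  have hg3mem : MemLp g3 2 μ := by
    refine MemLp.of_le hmem_er' hg3m.aestronglyMeasurable (Filter.Eventually.of_forall fun x => ?_)
    rw [hg3]
    simp only
    split_ifs
    · exact le_refl _
    · simp [Real.norm_eq_abs, abs_nonneg]
  set f3 : Lp ℝ 2 μ := hg3mem.toLp g3 with hf3
  have hf3coe : ⇑f3 =ᵐ[μ] g3 := hg3mem.coeFn_toLp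
  set u3 : ℕ → Lp ℝ 2 μ := fun n => er - er ⊓ ((n:ℝ) • es) with hu3
  have hCu3 : ∀ n, 0 ≤ u3 n ∧ P (u3 n) = u3 n := by
    intro n
    have hcs : 0 ≤ (n:ℝ) • es ∧ P ((n:ℝ) • es) = (n:ℝ) • es := by
      constructor
      · refine (Lp.coeFn_nonneg _).1 ?_
        filter_upwards [Lp.coeFn_smul (n:ℝ) es, (Lp.coeFn_nonneg es).2 hes0] with x h1 h2
        rw [h1]
        simp only [Pi.smul_apply, smul_eq_mul]
        exact mul_nonneg n.cast_nonneg h2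
      · rw [_root_.map_smul, hCes]
    have hci := hC_inf er ((n:ℝ) • es) her0 hCer hcs.1 hcs.2
    exact ⟨sub_nonneg.2 inf_le_left, by rw [hu3]; simp only; rw [map_sub, hCer, hci.2]⟩
  have hu3coe : ∀ n : ℕ, ∀ᵐ x ∂μ, (u3 n : X → ℝ) x = er' x - min (er' x) ((n:ℝ) * es' x) := by
    intro n
    filter_upwards [Lp.coeFn_sub er (er ⊓ ((n:ℝ) • es)), Lp.coeFn_inf er ((n:ℝ) • es),
      Lp.coeFn_smul (n:ℝ) es, hae] with x h1 h2 h3 hx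
    simp only [Pi.sub_apply, Pi.inf_apply, Pi.smul_apply, smul_eq_mul] at h1 h2 h3
    rw [hu3]
    simp only
    rw [h1, h2, h3, hx.1, hx.2]
  have htends3 : Tendsto u3 atTop (𝓝 f3) := by
    refine aux_tendsto_Lp u3 f3 er' hb_er (fun n => ?_) ?_
    · filter_upwards [hu3coe n, hf3coe] with x h1 h2
      rw [h1, h2, hg3]
      simp only
      have hmin1 : min (er' x) ((n:ℝ) * es' x) ≤ er' x := min_le_left _ _
      have hmin2 : 0 ≤ min (er' x) ((n:ℝ) * es' x) :=
        le_min (her'nn x) (mul_nonneg n.cast_nonneg (hes'nn x))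
      split_ifs with hes0x
      · rw [hes0x, mul_zero, min_eq_right (her'nn x)]
        simp [her'nn x]
      · rw [sub_zero, abs_of_nonneg (by linarith)]
        linarith
    · have hall := ae_all_iff.2 hu3coe
      filter_upwards [hall, hf3coe] with x h1 h2
      rw [h2, hg3]
      simp only
      by_cases hes0x : es' x = 0
      · rw [if_pos hes0x]
        have hconst : ∀ n : ℕ, (u3 n : X → ℝ) x = er' x := by
          intro n
          rw [h1 n, hes0x, mul_zero, min_eq_right (her'nn x), sub_zero]
        exact (tendsto_congr fun n => (hconst n).symm).1 tendsto_const_nhds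
      · rw [if_neg hes0x]
        have hesx : 0 < es' x := (hpos_iff_es x).1 hes0x
        obtain ⟨N, hN⟩ := exists_nat_gt (er' x / es' x)
        refine tendsto_atTop_of_eventually_const (i₀ := N) fun n hn => ?_
        rw [h1 n]
        have hle : er' x ≤ (n:ℝ) * es' x := by
          have h' : er' x / es' x < (n:ℝ) := hN.trans_le (by exact_mod_cast hn)
          rw [div_lt_iff₀ hesx] at h'
          linarith
        rw [min_eq_left hle, sub_self]
  have hPf3 : P f3 = f3 := by
    have h1 : Tendsto (fun n => P (u3 n)) atTop (𝓝 (P f3)) :=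
      (P.continuous.tendsto f3).comp htends3
    have h2 : (fun n => P (u3 n)) = u3 := funext fun n => (hCu3 n).2
    rw [h2] at h1
    exact tendsto_nhds_unique h1 htends3
  have hf3nn : 0 ≤ f3 := by
    refine (Lp.coeFn_nonneg f3).1 ?_
    filter_upwards [hf3coe] with x h
    rw [h, hg3]
    simp only [Pi.zero_apply]
    split_ifs
    · exact her'nn x
    · exact le_refl 0
  -- f4 : symmetric limit construction
  set g4 : X → ℝ := fun x => if er' x = 0 then es' x else 0 with hg4
  have hg4m : Measurable g4 :=
    Measurable.ite (her'm (measurableSet_singleton 0)) hes'm measurable_const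
  have hg4mem : MemLp g4 2 μ := by
    refine MemLp.of_le hmem_es' hg4m.aestronglyMeasurable (Filter.Eventually.of_forall fun x => ?_)
    rw [hg4]
    simp only
    split_ifs
    · exact le_refl _
    · simp [Real.norm_eq_abs, abs_nonneg]
  set f4 : Lp ℝ 2 μ := hg4mem.toLp g4 with hf4
  have hf4coe : ⇑f4 =ᵐ[μ] g4 := hg4mem.coeFn_toLp
  set u4 : ℕ → Lp ℝ 2 μ := fun n => es - es ⊓ ((n:ℝ) • er) with hu4
  have hCu4 : ∀ n, 0 ≤ u4 n ∧ P (u4 n) = u4 n := by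
    intro n
    have hcs : 0 ≤ (n:ℝ) • er ∧ P ((n:ℝ) • er) = (n:ℝ) • er := by
      constructor
      · refine (Lp.coeFn_nonneg _).1 ?_
        filter_upwards [Lp.coeFn_smul (n:ℝ) er, (Lp.coeFn_nonneg er).2 her0] with x h1 h2
        rw [h1]
        simp only [Pi.smul_apply, smul_eq_mul]
        exact mul_nonneg n.cast_nonneg h2
      · rw [_root_.map_smul, hCer]
    have hci := hC_inf es ((n:ℝ) • er) hes0 hCes hcs.1 hcs.2
    exact ⟨sub_nonneg.2 inf_le_left, by rw [hu4]; simp only; rw [map_sub, hCes, hci.2]⟩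
  have hu4coe : ∀ n : ℕ, ∀ᵐ x ∂μ, (u4 n : X → ℝ) x = es' x - min (es' x) ((n:ℝ) * er' x) := by
    intro n
    filter_upwards [Lp.coeFn_sub es (es ⊓ ((n:ℝ) • er)), Lp.coeFn_inf es ((n:ℝ) • er),
      Lp.coeFn_smul (n:ℝ) er, hae] with x h1 h2 h3 hx
    simp only [Pi.sub_apply, Pi.inf_apply, Pi.smul_apply, smul_eq_mul] at h1 h2 h3
    rw [hu4]
    simp only
    rw [h1, h2, h3, hx.1, hx.2]
  have htends4 : Tendsto u4 atTop (𝓝 f4) := by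
    refine aux_tendsto_Lp u4 f4 es' hb_es (fun n => ?_) ?_
    · filter_upwards [hu4coe n, hf4coe] with x h1 h2
      rw [h1, h2, hg4]
      simp only
      have hmin1 : min (es' x) ((n:ℝ) * er' x) ≤ es' x := min_le_left _ _
      have hmin2 : 0 ≤ min (es' x) ((n:ℝ) * er' x) :=
        le_min (hes'nn x) (mul_nonneg n.cast_nonneg (her'nn x))
      split_ifs with her0x
      · rw [her0x, mul_zero, min_eq_right (hes'nn x)]
        simp [hes'nn x]
      · rw [sub_zero, abs_of_nonneg (by linarith)]
        linarith
    · have hall := ae_all_iff.2 hu4coe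
      filter_upwards [hall, hf4coe] with x h1 h2
      rw [h2, hg4]
      simp only
      by_cases her0x : er' x = 0
      · rw [if_pos her0x]
        have hconst : ∀ n : ℕ, (u4 n : X → ℝ) x = es' x := by
          intro n
          rw [h1 n, her0x, mul_zero, min_eq_right (hes'nn x), sub_zero]
        exact (tendsto_congr fun n => (hconst n).symm).1 tendsto_const_nhds
      · rw [if_neg her0x]
        have herx : 0 < er' x := (hpos_iff_er x).1 her0x
        obtain ⟨N, hN⟩ := exists_nat_gt (es' x / er' x)
        refine tendsto_atTop_of_eventually_const (i₀ := N) fun n hn => ?_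
        rw [h1 n]
        have hle : es' x ≤ (n:ℝ) * er' x := by
          have h' : es' x / er' x < (n:ℝ) := hN.trans_le (by exact_mod_cast hn)
          rw [div_lt_iff₀ herx] at h'
          linarith
        rw [min_eq_left hle, sub_self]
  have hPf4 : P f4 = f4 := by
    have h1 : Tendsto (fun n => P (u4 n)) atTop (𝓝 (P f4)) :=
      (P.continuous.tendsto f4).comp htends4
    have h2 : (fun n => P (u4 n)) = u4 := funext fun n => (hCu4 n).2
    rw [h2] at h1
    exact tendsto_nhds_unique h1 htends4
  have hf4nn : 0 ≤ f4 := by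
    refine (Lp.coeFn_nonneg f4).1 ?_
    filter_upwards [hf4coe] with x h
    rw [h, hg4]
    simp only [Pi.zero_apply]
    split_ifs
    · exact hes'nn x
    · exact le_refl 0
  -- support target sets
  set T1 : Set X := {x | 0 < es' x ∧ t1 * es' x < er' x} with hT1
  set T2 : Set X := {x | 0 < er' x ∧ er' x < t1 * es' x} with hT2
  set T3 : Set X := {x | es' x = 0 ∧ 0 < er' x} with hT3
  set T4 : Set X := {x | er' x = 0 ∧ 0 < es' x} with hT4
  -- support characterizations
  have hs1 : ∀ᵐ x ∂μ, ((f1 : X → ℝ) x ≠ 0 → x ∈ T1) ∧ (x ∈ T1 → (f1 : X → ℝ) x ≠ 0) := by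
    filter_upwards [hf1coe] with x h
    rw [h]
    constructor
    · intro hne
      by_contra hc
      apply hne
      rcases le_or_gt (er' x) (t1 * es' x) with hle | hgt
      · rw [min_eq_left hle, sub_self, min_eq_left (her'nn x)]
      · have hes0x : es' x = 0 := by
          by_contra h0
          exact hc ⟨(hpos_iff_es x).1 h0, hgt⟩
        rw [hes0x, mul_zero, min_eq_right (her'nn x), sub_zero, min_eq_right (her'nn x)]
    · rintro ⟨h1, h2⟩
      have hmin : min (er' x) (t1 * es' x) = t1 * es' x := min_eq_right h2.le
      rw [hmin]
      have hpos2 : 0 < t1 * es' x := mul_pos ht1pos h1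
      exact (lt_min (by linarith) hpos2).ne'
  have hs2 : ∀ᵐ x ∂μ, ((f2 : X → ℝ) x ≠ 0 → x ∈ T2) ∧ (x ∈ T2 → (f2 : X → ℝ) x ≠ 0) := by
    filter_upwards [hf2coe] with x h
    rw [h]
    have hts : 0 ≤ t1 * es' x := mul_nonneg ht1pos.le (hes'nn x)
    constructor
    · intro hne
      by_contra hc
      apply hne
      rcases le_or_gt (t1 * es' x) (er' x) with hle | hgt
      · rw [min_eq_left hle, sub_self, min_eq_left hts]
      · have her0x : er' x = 0 := by
          by_contra h0
          exact hc ⟨(hpos_iff_er x).1 h0, hgt⟩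
        rw [her0x, min_eq_right hts, sub_zero, min_eq_right hts]
    · rintro ⟨h1, h2⟩
      have hmin : min (t1 * es' x) (er' x) = er' x := min_eq_right h2.le
      rw [hmin]
      exact (lt_min (by linarith) h1).ne'
  have hs3 : ∀ᵐ x ∂μ, ((f3 : X → ℝ) x ≠ 0 → x ∈ T3) ∧ (x ∈ T3 → (f3 : X → ℝ) x ≠ 0) := by
    filter_upwards [hf3coe] with x h
    rw [h, hg3]
    simp only
    constructor
    · intro hne
      split_ifs at hne with h0
      · exact ⟨h0, (hpos_iff_er x).1 hne⟩
      · exact absurd rfl hne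
    · rintro ⟨h1, h2⟩
      rw [if_pos h1]
      exact h2.ne'
  have hs4 : ∀ᵐ x ∂μ, ((f4 : X → ℝ) x ≠ 0 → x ∈ T4) ∧ (x ∈ T4 → (f4 : X → ℝ) x ≠ 0) := by
    filter_upwards [hf4coe] with x h
    rw [h, hg4]
    simp only
    constructor
    · intro hne
      split_ifs at hne with h0
      · exact ⟨h0, (hpos_iff_es x).1 hne⟩
      · exact absurd rfl hne
    · rintro ⟨h1, h2⟩
      rw [if_pos h1]
      exact h2.ne'
  -- positivity of target sets
  have hT1pos : 0 < μ T1 := hGpos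
  have hT2pos : 0 < μ T2 := hLpos
  have hT3pos : 0 < μ T3 := hrs'
  have hT4pos : 0 < μ T4 := hsr'
  -- nonzero helper
  have hnz : ∀ (f : Lp ℝ 2 μ) (T : Set X),
      (∀ᵐ x ∂μ, x ∈ T → (f : X → ℝ) x ≠ 0) → 0 < μ T → f ≠ 0 := by
    intro f T hT hTpos hf0
    have h0 : ⇑f =ᵐ[μ] 0 := by rw [hf0]; exact Lp.coeFn_zero ℝ 2 μ
    have hn : ∀ᵐ x ∂μ, x ∉ T := by
      filter_upwards [hT, h0] with x h1 h2 hx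
      exact h1 hx (h2.trans rfl)
    exact absurd (measure_eq_zero_iff_ae_notMem.2 hn) hTpos.ne'
  -- disjointness helper
  have hdisj : ∀ (f g : Lp ℝ 2 μ) (Tf Tg : Set X),
      (∀ᵐ x ∂μ, (f : X → ℝ) x ≠ 0 → x ∈ Tf) → (∀ᵐ x ∂μ, (g : X → ℝ) x ≠ 0 → x ∈ Tg) →
      (∀ x, x ∈ Tf → x ∈ Tg → False) →
      μ (Function.support (f : X → ℝ) ∩ Function.support (g : X → ℝ)) = 0 := by
    intro f g Tf Tg hf hg hfg
    refine measure_eq_zero_iff_ae_notMem.2 ?_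
    filter_upwards [hf, hg] with x h1 h2
    rintro ⟨hx1, hx2⟩
    exact hfg x (h1 (Function.mem_support.1 hx1)) (h2 (Function.mem_support.1 hx2))
  -- pointwise disjointness of targets
  have hd12 : ∀ x, x ∈ T1 → x ∈ T2 → False := by
    rintro x ⟨a1', a2⟩ ⟨b1, b2⟩; linarith
  have hd13 : ∀ x, x ∈ T1 → x ∈ T3 → False := by
    rintro x ⟨a1', a2⟩ ⟨b1, b2⟩; linarith
  have hd14 : ∀ x, x ∈ T1 → x ∈ T4 → False := by
    rintro x ⟨a1', a2⟩ ⟨b1, b2⟩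
    have := mul_pos ht1pos a1'
    linarith
  have hd23 : ∀ x, x ∈ T2 → x ∈ T3 → False := by
    rintro x ⟨a1', a2⟩ ⟨b1, b2⟩
    rw [b1, mul_zero] at a2
    linarith
  have hd24 : ∀ x, x ∈ T2 → x ∈ T4 → False := by
    rintro x ⟨a1', a2⟩ ⟨b1, b2⟩; linarith
  have hd34 : ∀ x, x ∈ T3 → x ∈ T4 → False := by
    rintro x ⟨a1', a2⟩ ⟨b1, b2⟩; linarith
  -- the one-sided support statements
  have hs1' : ∀ᵐ x ∂μ, (f1 : X → ℝ) x ≠ 0 → x ∈ T1 := by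
    filter_upwards [hs1] with x h; exact h.1
  have hs2' : ∀ᵐ x ∂μ, (f2 : X → ℝ) x ≠ 0 → x ∈ T2 := by
    filter_upwards [hs2] with x h; exact h.1
  have hs3' : ∀ᵐ x ∂μ, (f3 : X → ℝ) x ≠ 0 → x ∈ T3 := by
    filter_upwards [hs3] with x h; exact h.1
  have hs4' : ∀ᵐ x ∂μ, (f4 : X → ℝ) x ≠ 0 → x ∈ T4 := by
    filter_upwards [hs4] with x h; exact h.1
  -- assemble
  refine ⟨![f1, f2, f3, f4], ?_, ?_, ?_, ?_⟩
  · intro i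
    fin_cases i
    · simp only [Matrix.cons_val_zero]
      rw [hf1, ← hCf1.2]; exact hPrange _
    · simp only [Matrix.cons_val_one, Matrix.head_cons]
      rw [hf2, ← hCf2.2]; exact hPrange _
    · simp only [Matrix.cons_val_two, Matrix.tail_cons, Matrix.head_cons]
      rw [← hPf3]; exact hPrange f3
    · simp only [Matrix.cons_val_three, Matrix.tail_cons, Matrix.head_cons]
      rw [← hPf4]; exact hPrange f4
  · intro i
    fin_cases i
    · simp only [Matrix.cons_val_zero]
      exact hnz f1 T1 (by filter_upwards [hs1] with x h; exact h.2) hT1pos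
    · simp only [Matrix.cons_val_one, Matrix.head_cons]
      exact hnz f2 T2 (by filter_upwards [hs2] with x h; exact h.2) hT2pos
    · simp only [Matrix.cons_val_two, Matrix.tail_cons, Matrix.head_cons]
      exact hnz f3 T3 (by filter_upwards [hs3] with x h; exact h.2) hT3pos
    · simp only [Matrix.cons_val_three, Matrix.tail_cons, Matrix.head_cons]
      exact hnz f4 T4 (by filter_upwards [hs4] with x h; exact h.2) hT4pos
  · intro i
    fin_cases i
    · simp only [Matrix.cons_val_zero]; exact hCf1.1
    · simp only [Matrix.cons_val_one, Matrix.head_cons]; exact hCf2.1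
    · simp only [Matrix.cons_val_two, Matrix.tail_cons, Matrix.head_cons]; exact hf3nn
    · simp only [Matrix.cons_val_three, Matrix.tail_cons, Matrix.head_cons]; exact hf4nn
  · intro i j hij
    fin_cases i <;> fin_cases j <;>
      simp only [Matrix.cons_val_zero, Matrix.cons_val_one, Matrix.head_cons,
        Matrix.cons_val_two, Matrix.cons_val_three, Matrix.tail_cons] <;>
      first
        | exact absurd rfl hij
        | exact hdisj f1 f2 T1 T2 hs1' hs2' hd12
        | exact hdisj f1 f3 T1 T3 hs1' hs3' hd13
        | exact hdisj f1 f4 T1 T4 hs1' hs4' hd14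
        | exact hdisj f2 f1 T2 T1 hs2' hs1' (fun x h1 h2 => hd12 x h2 h1)
        | exact hdisj f2 f3 T2 T3 hs2' hs3' hd23
        | exact hdisj f2 f4 T2 T4 hs2' hs4' hd24
        | exact hdisj f3 f1 T3 T1 hs3' hs1' (fun x h1 h2 => hd13 x h2 h1)
        | exact hdisj f3 f2 T3 T2 hs3' hs2' (fun x h1 h2 => hd23 x h2 h1)
        | exact hdisj f3 f4 T3 T4 hs3' hs4' hd34
        | exact hdisj f4 f1 T4 T1 hs4' hs1' (fun x h1 h2 => hd14 x h2 h1)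
        | exact hdisj f4 f2 T4 T2 hs4' hs2' (fun x h1 h2 => hd24 x h2 h1)
        | exact hdisj f4 f3 T4 T3 hs4' hs3' (fun x h1 h2 => hd34 x h2 h1)
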